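/- Indicator of a box via a Step network under F_p: for any p ∈ ℕ and d ≤ 2^p, there is a 3-layer Step network architecture of 6d + 2 parameters over F_p such that for all α_1 < β_1, …, α_d < β_d in F_p there is a parameter choice making the network output exactly 1[x ∈ ∏_{i=1}^d [α_i, β_i]] for all x ∈ [0,1]^d ∩ F_p^d, despite all arithmetic being performed as rounded floating-point operations in F_p. -/

import Mathlib

/-- `F_p`: binary floating-point numbers with `(p+1)`-bit significand and
unbounded exponent, together with `0`: reals of the form `±m·2^e` with
`2^p ≤ m < 2^(p+1)`, `e : ℤ`. -/
def Fp (p : ℕ) : Set ℝ :=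
  {x | x = 0 ∨ ∃ (s : ℤ) (m : ℕ) (e : ℤ), (s = 1 ∨ s = -1) ∧
    2 ^ p ≤ m ∧ m < 2 ^ (p + 1) ∧ x = (s : ℝ) * m * (2 : ℝ) ^ e}

/-- `z` has an even last significand bit (or is zero). -/
def EvenSigFp (p : ℕ) (z : ℝ) : Prop :=
  z = 0 ∨ ∃ (s : ℤ) (m : ℕ) (e : ℤ), (s = 1 ∨ s = -1) ∧
    2 ^ p ≤ m ∧ m < 2 ^ (p + 1) ∧ m % 2 = 0 ∧ z = (s : ℝ) * m * (2 : ℝ) ^ e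

/-- `z` is the round-to-nearest (ties to even) value of `r` in `F_p`. -/
def RoundsTo (p : ℕ) (r z : ℝ) : Prop :=
  z ∈ Fp p ∧ (∀ w ∈ Fp p, |r - z| ≤ |r - w|) ∧
    ((∃ w ∈ Fp p, w ≠ z ∧ |r - w| = |r - z|) → EvenSigFp p z)

/-- A feedforward architecture on `d` inputs: `L` layers, layer widths, and
for each neuron in layer `l+1` (and the output neuron in layer `L`) a set of
indices of the previous layer's neurons (index `width l` denoting the bias
input `1`) that it is connected to; each connection carries one free
parameter. -/
structure Arch (d : ℕ) where
  L : ℕ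
  width : ℕ → ℕ
  input_eq : width 0 = d
  output_eq : width L = 1
  idx : ℕ → ℕ → Finset ℕ
  idx_sub : ∀ l i, idx (l + 1) i ⊆ Finset.range (width l + 1)

/-- Total number of free parameters of an architecture. -/
def Arch.nParams {d : ℕ} (A : Arch d) : ℕ :=
  ∑ l ∈ Finset.range A.L, ∑ i ∈ Finset.range (A.width (l + 1)), (A.idx (l + 1) i).card

/-- Floating-point affine map: each product `w j * v j` is rounded, and the
partial sums are accumulated left-to-right with each partial sum rounded. -/
noncomputable def fpAff (rnd : ℝ → ℝ) (w v : ℕ → ℝ) (s : List ℕ) : ℝ :=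
  s.foldl (fun a j => rnd (a + rnd (w j * v j))) 0

/-- Post-activation values of layer `l` (augmented with the bias value `1` at
index `width l`), computed with rounded floating-point operations. -/
noncomputable def postAct {d : ℕ} (A : Arch d) (σ rnd : ℝ → ℝ)
    (θ : ℕ → ℕ → ℕ → ℝ) (x : ℕ → ℝ) : ℕ → ℕ → ℝ
  | 0 => fun j => if j = A.width 0 then 1 else x j
  | l + 1 => fun j =>
      if j = A.width (l + 1) then 1
      else rnd (σ (fpAff rnd (θ (l + 1) j) (postAct A σ rnd θ x l)
        ((A.idx (l + 1) j).sort (· ≤ ·))))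

/-- Network output: the (pre-activation) affine output of the last layer. -/
noncomputable def evalNet {d : ℕ} (A : Arch d) (σ rnd : ℝ → ℝ)
    (θ : ℕ → ℕ → ℕ → ℝ) (x : ℕ → ℝ) : ℝ :=
  fpAff rnd (θ A.L 0) (postAct A σ rnd θ x (A.L - 1)) ((A.idx A.L 0).sort (· ≤ ·))

/-- The binary threshold activation `Step(t) = 1[t ≥ 0]`. -/
noncomputable def stepAct : ℝ → ℝ := fun t => if 0 ≤ t then 1 else 0

lemma zero_mem_Fp (p : ℕ) : (0:ℝ) ∈ Fp p := Or.inl rfl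

lemma neg_mem_Fp {p : ℕ} {x : ℝ} (h : x ∈ Fp p) : -x ∈ Fp p := by
  rcases h with h | ⟨s, m, e, hs, h1, h2, h3⟩
  · exact Or.inl (by rw [h]; ring)
  · refine Or.inr ⟨-s, m, e, ?_, h1, h2, ?_⟩
    · rcases hs with h | h <;> simp [h]
    · push_cast [h3]; ring

lemma nat_mem_Fp (p : ℕ) (n : ℕ) (hn : n ≤ 2 ^ (p + 1)) : (n : ℝ) ∈ Fp p := by
  rcases Nat.eq_zero_or_pos n with h0 | h0
  · exact Or.inl (by simp [h0])
  rcases eq_or_lt_of_le hn with he | hlt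
  · refine Or.inr ⟨1, 2 ^ p, 1, Or.inl rfl, le_refl _, ?_, ?_⟩
    · exact Nat.pow_lt_pow_right one_lt_two (Nat.lt_succ_self p)
    · rw [he]; push_cast; ring
  · have hlog : Nat.log 2 n ≤ p := by
      have := Nat.log_lt_of_lt_pow (h0.ne') hlt
      omega
    set k := p - Nat.log 2 n with hk
    refine Or.inr ⟨1, n * 2 ^ k, -(k:ℤ), Or.inl rfl, ?_, ?_, ?_⟩
    · calc (2:ℕ)^p = 2 ^ (Nat.log 2 n + k) := by rw [hk]; congr 1; omega
        _ = 2 ^ Nat.log 2 n * 2 ^ k := pow_add 2 _ _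
        _ ≤ n * 2 ^ k := by
            exact Nat.mul_le_mul_right _ (Nat.pow_log_le_self 2 h0.ne')
    · calc n * 2 ^ k < 2 ^ (Nat.log 2 n + 1) * 2 ^ k := by
            exact Nat.mul_lt_mul_of_lt_of_le (Nat.lt_pow_succ_log_self (by norm_num) n)
              (le_refl _) (Nat.pow_pos (by norm_num))
        _ = 2 ^ (Nat.log 2 n + 1 + k) := (pow_add 2 _ _).symm
        _ ≤ 2 ^ (p+1) := Nat.pow_le_pow_right (by norm_num) (by omega)
    · push_cast
      rw [zpow_neg, zpow_natCast]
      field_simp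

lemma one_mem_Fp (p : ℕ) : (1:ℝ) ∈ Fp p := by
  have := nat_mem_Fp p 1 (Nat.one_le_two_pow)
  simpa using this

lemma neg_one_mem_Fp (p : ℕ) : (-1:ℝ) ∈ Fp p := neg_mem_Fp (one_mem_Fp p)

section rnd
variable {p : ℕ} {rnd : ℝ → ℝ} (hr : ∀ r, RoundsTo p r (rnd r))

include hr

lemma rnd_id {r : ℝ} (h : r ∈ Fp p) : rnd r = r := by
  have := (hr r).2.1 r h
  simp only [sub_self, abs_zero] at this
  have : |r - rnd r| = 0 := le_antisymm this (abs_nonneg _)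
  have := abs_eq_zero.mp this
  linarith

lemma rnd_nonneg {r : ℝ} (h : 0 ≤ r) : 0 ≤ rnd r := by
  by_contra hneg
  push_neg at hneg
  have := (hr r).2.1 0 (zero_mem_Fp p)
  rw [sub_zero, abs_of_nonneg h, abs_of_pos (by linarith : 0 < r - rnd r)] at this
  linarith

lemma rnd_neg' {r : ℝ} (h : r < 0) : rnd r < 0 := by
  -- find w ∈ Fp with r ≤ w < 0
  set e : ℤ := Int.log 2 (-r) - p with he
  have h2 : (0:ℝ) < 2 ^ (p : ℤ) * 2 ^ e := by positivity
  have hle : (2:ℝ) ^ (p:ℤ) * 2 ^ e ≤ -r := by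
    rw [← zpow_add₀ (by norm_num : (2:ℝ) ≠ 0)]
    have h1 : (1:ℕ) < 2 := by norm_num
    have := Int.zpow_log_le_self h1 (by linarith : (0:ℝ) < -r)
    convert this using 2
    · rfl
    · norm_num
    · omega
  have hw : (-(2 ^ (p:ℤ) * 2 ^ e) : ℝ) ∈ Fp p := by
    refine Or.inr ⟨-1, 2 ^ p, e, Or.inr rfl, le_refl _,
      Nat.pow_lt_pow_right one_lt_two (Nat.lt_succ_self p), ?_⟩
    push_cast
    rw [← zpow_natCast (2:ℝ) p]
    ring
  have hmin := (hr r).2.1 _ hw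
  by_contra hge
  push_neg at hge
  have habs1 : |r - -(2 ^ (p:ℤ) * 2 ^ e)| = -r - 2 ^ (p:ℤ) * 2 ^ e := by
    rw [abs_of_nonpos (by linarith)]; ring
  rw [habs1, abs_of_nonpos (by linarith : r - rnd r ≤ 0)] at hmin
  linarith

lemma rnd_nonneg_iff (r : ℝ) : 0 ≤ rnd r ↔ 0 ≤ r := by
  constructor
  · intro h; by_contra hn; push_neg at hn; exact absurd h (not_le.mpr (rnd_neg' hr hn))
  · exact rnd_nonneg hr

end rnd
def boxW (d : ℕ) : ℕ → ℕ
  | 0 => d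
  | 1 => 2 * d
  | _ + 2 => 1

def boxIdx (d : ℕ) : ℕ → ℕ → Finset ℕ
  | 1, i => if i < 2 * d then insert (i / 2) {d} else ∅
  | 2, i => if i = 0 then Finset.range (2 * d + 1) else ∅
  | 3, i => if i = 0 then {0} else ∅
  | _, _ => ∅

lemma half_lt {d i : ℕ} (h : i < 2 * d) : i / 2 < d := Nat.div_lt_of_lt_mul (by omega)

def boxArch (d : ℕ) : Arch d where
  L := 3
  width := boxW d
  input_eq := rfl
  output_eq := rfl
  idx := boxIdx d
  idx_sub := by
    intro l i
    match l with
    | 0 =>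
      simp only [boxIdx, boxW]
      split
      · intro j hj
        simp only [Finset.mem_insert, Finset.mem_singleton] at hj
        rcases hj with h | h <;> subst h <;> simp [Finset.mem_range]
        · have := half_lt (by assumption); omega
      · simp
    | 1 =>
      simp only [boxIdx, boxW]
      split
      · intro j hj; simpa using hj
      · simp
    | 2 =>
      simp only [boxIdx, boxW]
      split
      · intro j hj; simp at hj; simp [hj]
      · simp
    | n + 3 => simp [boxIdx]

lemma boxArch_nParams (d : ℕ) : (boxArch d).nParams = 6 * d + 2 := by
  unfold Arch.nParams
  show ∑ l ∈ Finset.range 3, ∑ i ∈ Finset.range (boxW d (l + 1)), ((boxIdx d) (l + 1) i).card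
    = 6 * d + 2
  rw [Finset.sum_range_succ, Finset.sum_range_succ, Finset.sum_range_one]
  have h1 : ∑ i ∈ Finset.range (boxW d 1), ((boxIdx d) 1 i).card = 4 * d := by
    show ∑ i ∈ Finset.range (2 * d), ((boxIdx d) 1 i).card = 4 * d
    have hc : ∀ i ∈ Finset.range (2 * d), ((boxIdx d) 1 i).card = 2 := by
      intro i hi
      simp only [Finset.mem_range] at hi
      simp only [boxIdx, if_pos hi]
      rw [Finset.card_insert_of_notMem (by simp [(half_lt hi).ne])]
      simp
    rw [Finset.sum_congr rfl hc, Finset.sum_const, Finset.card_range]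
    ring
  have h2 : ∑ i ∈ Finset.range (boxW d 2), ((boxIdx d) 2 i).card = 2 * d + 1 := by
    show ∑ i ∈ Finset.range 1, ((boxIdx d) 2 i).card = 2 * d + 1
    simp [boxIdx]
  have h3 : ((boxIdx d) 3 0).card = 1 := by simp [boxIdx]
  rw [h1, h2]
  show 4 * d + (2 * d + 1) + ((boxIdx d) 3 0).card = 6 * d + 2
  rw [h3]; ring
lemma postAct_succ {d : ℕ} (A : Arch d) (σ rnd : ℝ → ℝ) (θ : ℕ → ℕ → ℕ → ℝ)
    (x : ℕ → ℝ) (l j : ℕ) :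
    postAct A σ rnd θ x (l + 1) j =
      if j = A.width (l + 1) then 1
      else rnd (σ (fpAff rnd (θ (l + 1) j) (postAct A σ rnd θ x l)
        ((A.idx (l + 1) j).sort (· ≤ ·)))) := rfl

lemma postAct_zero {d : ℕ} (A : Arch d) (σ rnd : ℝ → ℝ) (θ : ℕ → ℕ → ℕ → ℝ)
    (x : ℕ → ℝ) (j : ℕ) :
    postAct A σ rnd θ x 0 j = if j = A.width 0 then 1 else x j := rfl
open Classical in
/-- Indicator of a box via a Step network under `F_p`: for `d ≤ 2^p` there is
a fixed 3-layer Step-network architecture with `6d + 2` parameters such that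
for any `α_i < β_i` in `F_p` some choice of `F_p` parameters makes the network
output exactly `1[x ∈ ∏ᵢ [αᵢ, βᵢ]]` on all `x ∈ [0,1]^d ∩ F_p^d`, with all
arithmetic performed as rounded floating-point operations in `F_p`. -/
theorem box_indicator_step_Fp (p d : ℕ) (hd : d ≤ 2 ^ p) :
    ∃ A : Arch d, A.L = 3 ∧ A.nParams = 6 * d + 2 ∧
      ∀ rnd : ℝ → ℝ, (∀ r, RoundsTo p r (rnd r)) →
        ∀ α β : ℕ → ℝ, (∀ j < d, α j ∈ Fp p ∧ β j ∈ Fp p ∧ α j < β j) →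
          ∃ θ : ℕ → ℕ → ℕ → ℝ, (∀ l i j, θ l i j ∈ Fp p) ∧
            ∀ x : ℕ → ℝ, (∀ j < d, x j ∈ Set.Icc (0 : ℝ) 1 ∧ x j ∈ Fp p) →
              evalNet A stepAct rnd θ x =
                if ∀ j < d, x j ∈ Set.Icc (α j) (β j) then 1 else 0 := by
  classical
  refine ⟨boxArch d, rfl, boxArch_nParams d, ?_⟩
  intro rnd hr α β hαβ
  have h2d : 2 * d ≤ 2 ^ (p + 1) := by
    have : (2:ℕ) ^ (p+1) = 2 ^ p * 2 := pow_succ 2 p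
    omega
  set θ : ℕ → ℕ → ℕ → ℝ := fun l i j =>
    if l = 1 ∧ i < 2 * d then
      (if j = d then (if i % 2 = 0 then -α (i / 2) else β (i / 2))
       else (if i % 2 = 0 then 1 else -1))
    else if l = 2 ∧ i = 0 then (if j = 2 * d then -((2 * d : ℕ) : ℝ) else 1)
    else 1 with hθdef
  refine ⟨θ, ?_, ?_⟩
  · intro l i j
    simp only [hθdef]
    split
    · rename_i h
      have hhalf := half_lt h.2
      split
      · split
        · exact neg_mem_Fp (hαβ _ hhalf).1
        · exact (hαβ _ hhalf).2.1
      · split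
        · exact one_mem_Fp p
        · exact neg_one_mem_Fp p
    · split
      · split
        · exact neg_mem_Fp (nat_mem_Fp p _ h2d)
        · exact one_mem_Fp p
      · exact one_mem_Fp p
  intro x hx
  set sat : ℕ → Prop :=
    fun i => if i % 2 = 0 then α (i / 2) ≤ x (i / 2) else x (i / 2) ≤ β (i / 2) with hsat
  -- layer 1
  have hL1 : ∀ i < 2 * d, postAct (boxArch d) stepAct rnd θ x 1 i
      = if sat i then 1 else 0 := by
    intro i hi
    have hhalf := half_lt hi
    have hxi : x (i / 2) ∈ Fp p := (hx _ hhalf).2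
    have hαi := hαβ _ hhalf
    have hne : i ≠ (boxArch d).width 1 := by
      show i ≠ boxW d 1; simp only [boxW]; omega
    rw [postAct_succ, if_neg hne]
    have hsort : (((boxArch d).idx 1 i).sort (· ≤ ·)) = [i / 2, d] := by
      show ((boxIdx d 1 i).sort (· ≤ ·)) = [i / 2, d]
      simp only [boxIdx, if_pos hi]
      have h1 : ∀ b ∈ ({d} : Finset ℕ), i / 2 ≤ b := by
        intro b hb; simp only [Finset.mem_singleton] at hb; omega
      have h2 : i / 2 ∉ ({d} : Finset ℕ) := by simp [hhalf.ne]
      rw [Finset.sort_insert _ h1 h2, Finset.sort_singleton]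
    rw [hsort]
    simp only [fpAff, List.foldl]
    rw [postAct_zero, postAct_zero]
    have hv1 : (if i / 2 = (boxArch d).width 0 then (1:ℝ) else x (i / 2)) = x (i / 2) := by
      rw [if_neg]; show i / 2 ≠ boxW d 0; simp only [boxW]; omega
    have hv2 : (if d = (boxArch d).width 0 then (1:ℝ) else x d) = 1 := by
      rw [if_pos]; rfl
    rw [hv1, hv2]
    have hw1 : θ 1 i (i / 2) = if i % 2 = 0 then 1 else -1 := by
      simp [hθdef, hi, hhalf.ne]
    have hw2 : θ 1 i d = if i % 2 = 0 then -α (i / 2) else β (i / 2) := by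
      simp [hθdef, hi]
    rw [hw1, hw2]
    by_cases hpar : i % 2 = 0
    · rw [if_pos hpar, if_pos hpar, one_mul, rnd_id hr hxi, zero_add, rnd_id hr hxi,
        mul_one, rnd_id hr (neg_mem_Fp hαi.1)]
      have : stepAct (rnd (x (i / 2) + -α (i / 2))) = if sat i then 1 else 0 := by
        unfold stepAct
        refine if_congr ?_ rfl rfl
        rw [rnd_nonneg_iff hr]
        simp only [hsat, hpar, if_true]
        constructor <;> intro h <;> linarith
      rw [this]
      split <;> [exact rnd_id hr (one_mem_Fp p); exact rnd_id hr (zero_mem_Fp p)]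
    · rw [if_neg hpar, if_neg hpar, neg_one_mul, rnd_id hr (neg_mem_Fp hxi), zero_add,
        rnd_id hr (neg_mem_Fp hxi), mul_one, rnd_id hr hαi.2.1]
      have : stepAct (rnd (-x (i / 2) + β (i / 2))) = if sat i then 1 else 0 := by
        unfold stepAct
        refine if_congr ?_ rfl rfl
        rw [rnd_nonneg_iff hr]
        simp only [hsat, hpar, if_false]
        constructor <;> intro h <;> linarith
      rw [this]
      split <;> [exact rnd_id hr (one_mem_Fp p); exact rnd_id hr (zero_mem_Fp p)]
  -- layer 2 partial sums
  set N : ℕ := ((Finset.range (2 * d)).filter sat).card with hN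
  have hNle : N ≤ 2 * d := le_trans (Finset.card_filter_le _ _) (by simp)
  have key : ∀ k ≤ 2 * d, (List.range k).foldl
      (fun a j => rnd (a + rnd (θ 2 0 j * postAct (boxArch d) stepAct rnd θ x 1 j))) 0
      = (((Finset.range k).filter sat).card : ℝ) := by
    intro k hk
    induction k with
    | zero => simp
    | succ k ih =>
      rw [List.range_succ, List.foldl_append, ih (by omega)]
      simp only [List.foldl]
      have hθk : θ 2 0 k = 1 := by
        simp [hθdef, show k ≠ 2 * d by omega]
      have hcard2 : ((Finset.range k).filter sat).card ≤ k := by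
        have := Finset.card_filter_le (Finset.range k) sat
        simpa using this
      have hcard : (((Finset.range k).filter sat).card : ℕ) ≤ 2 ^ (p + 1) := by omega
      rw [hθk, hL1 k (by omega), one_mul, Finset.range_add_one, Finset.filter_insert]
      by_cases hs : sat k
      · rw [if_pos hs, if_pos hs, rnd_id hr (one_mem_Fp p),
          Finset.card_insert_of_notMem (by simp)]
        have hcast : (((Finset.range k).filter sat).card : ℝ) + 1
            = ((((Finset.range k).filter sat).card + 1 : ℕ) : ℝ) := by push_cast; ring
        rw [hcast, rnd_id hr (nat_mem_Fp p _ (by omega))]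
      · rw [if_neg hs, if_neg hs, rnd_id hr (zero_mem_Fp p), add_zero,
          rnd_id hr (nat_mem_Fp p _ hcard)]
  -- layer 2 output
  have hL2 : postAct (boxArch d) stepAct rnd θ x 2 0 = if N = 2 * d then 1 else 0 := by
    rw [postAct_succ, if_neg (by show (0:ℕ) ≠ boxW d 2; simp [boxW])]
    have hsort2 : (((boxArch d).idx 2 0).sort (· ≤ ·)) = List.range (2 * d + 1) := by
      show ((boxIdx d 2 0).sort (· ≤ ·)) = _
      simp [boxIdx, Finset.sort_range]
    rw [hsort2]
    unfold fpAff
    rw [List.range_succ, List.foldl_append, key (2 * d) le_rfl]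
    simp only [List.foldl]
    have hb : postAct (boxArch d) stepAct rnd θ x 1 (2 * d) = 1 := by
      rw [postAct_succ, if_pos]; rfl
    have hθb : θ 2 0 (2 * d) = -((2 * d : ℕ) : ℝ) := by
      simp [hθdef]
    rw [hb, hθb, mul_one, rnd_id hr (neg_mem_Fp (nat_mem_Fp p _ h2d))]
    have hcast : (N : ℝ) + -((2 * d : ℕ) : ℝ) = -(((2 * d - N : ℕ) : ℝ)) := by
      rw [Nat.cast_sub hNle]; ring
    rw [hcast, rnd_id hr (neg_mem_Fp (nat_mem_Fp p _ (by omega)))]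
    have hstep : stepAct (-(((2 * d - N : ℕ) : ℝ))) = if N = 2 * d then 1 else 0 := by
      unfold stepAct
      refine if_congr ?_ rfl rfl
      rw [neg_nonneg]
      constructor
      · intro h
        have : ((2 * d - N : ℕ) : ℝ) = 0 := le_antisymm h (by positivity)
        have := Nat.cast_eq_zero.mp this
        omega
      · intro h; simp [h]
    rw [hstep]
    split <;> [exact rnd_id hr (one_mem_Fp p); exact rnd_id hr (zero_mem_Fp p)]
  -- output layer
  have hout : evalNet (boxArch d) stepAct rnd θ x = if N = 2 * d then 1 else 0 := by
    unfold evalNet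
    have hsort3 : (((boxArch d).idx (boxArch d).L 0).sort (· ≤ ·)) = [0] := by
      show ((boxIdx d 3 0).sort (· ≤ ·)) = [0]
      simp [boxIdx]
    rw [hsort3]
    show rnd (0 + rnd (θ (boxArch d).L 0 0 * postAct (boxArch d) stepAct rnd θ x
      ((boxArch d).L - 1) 0)) = _
    have hθ3 : θ (boxArch d).L 0 0 = 1 := by
      show θ 3 0 0 = 1
      simp [hθdef]
    show rnd (0 + rnd (θ (boxArch d).L 0 0 * postAct (boxArch d) stepAct rnd θ x 2 0)) = _
    rw [hθ3, one_mul, hL2]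
    split
    · rw [rnd_id hr (one_mem_Fp p), zero_add, rnd_id hr (one_mem_Fp p)]
    · rw [rnd_id hr (zero_mem_Fp p), add_zero, rnd_id hr (zero_mem_Fp p)]
  rw [hout]
  refine if_congr ?_ rfl rfl
  constructor
  · intro h j hj
    have hfull : (Finset.range (2 * d)).filter sat = Finset.range (2 * d) :=
      Finset.eq_of_subset_of_card_le (Finset.filter_subset _ _)
        (by rw [Finset.card_range, ← hN, h])
    have hsatall : ∀ i < 2 * d, sat i := by
      intro i hi
      have : i ∈ (Finset.range (2 * d)).filter sat := by
        rw [hfull]; exact Finset.mem_range.mpr hi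
      exact (Finset.mem_filter.mp this).2
    have h1 := hsatall (2 * j) (by omega)
    have h2 := hsatall (2 * j + 1) (by omega)
    simp only [hsat] at h1 h2
    simp only [Nat.mul_mod_right, if_pos] at h1
    have he1 : (2 * j) / 2 = j := by omega
    have he2 : (2 * j + 1) / 2 = j := by omega
    have ho : (2 * j + 1) % 2 = 1 := by omega
    rw [he1] at h1
    rw [if_neg (by omega), he2] at h2
    exact ⟨h1, h2⟩
  · intro h
    rw [hN]
    have hfull : (Finset.range (2 * d)).filter sat = Finset.range (2 * d) := by
      apply Finset.filter_true_of_mem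
      intro i hi
      rw [Finset.mem_range] at hi
      have hhalf := half_lt hi
      have := h (i / 2) hhalf
      simp only [hsat]
      split
      · exact this.1
      · exact this.2
    rw [hfull, Finset.card_range]
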